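/- Let λᵢ, μᵢ > 0, α ∈ (0,1), and let x* ∈ [0,1]ⁿ be a feasible interior point (Σλᵢx*ᵢ/μᵢ < α and Σλᵢ(1−x*ᵢ)/μᵢ < 1−α) with two indices i ≠ j such that 0 < x*ᵢ < 1 and 0 < x*ⱼ < 1 and μᵢ ≠ μⱼ. Define x(ε) by xᵢ(ε) = x*ᵢ + (μᵢ/λᵢ)ε, xⱼ(ε) = x*ⱼ − (μⱼ/λⱼ)ε, xₖ(ε) = x*ₖ otherwise, and l(ε) = f(x(ε), α) where f is the two-queue expected waiting time. Then l''(0) < 0; in particular x* cannot be a local minimizer of f(·, α). -/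

import Mathlib

noncomputable def pert (n : ℕ) (lam mu x : Fin n → ℝ) (i j : Fin n) (ε : ℝ) : Fin n → ℝ :=
  fun k => if k = i then x i + mu i / lam i * ε
    else if k = j then x j - mu j / lam j * ε else x k

lemma pert_sum (n : ℕ) (lam mu x : Fin n → ℝ) (i j : Fin n) (hij : i ≠ j)
    (h : Fin n → ℝ) (ε : ℝ) :
    ∑ k, h k * pert n lam mu x i j ε k
      = (∑ k, h k * x k) + (h i * (mu i / lam i) - h j * (mu j / lam j)) * ε := by
  have hptw : ∀ k, h k * pert n lam mu x i j ε k
      = h k * x k + ((if k = i then h i * (mu i / lam i) * ε else 0)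
        + (if k = j then -(h j * (mu j / lam j) * ε) else 0)) := by
    intro k
    unfold pert
    by_cases h1 : k = i
    · subst h1; rw [if_pos rfl, if_pos rfl, if_neg hij]; ring
    · rw [if_neg h1, if_neg h1]
      by_cases h2 : k = j
      · subst h2; rw [if_pos rfl, if_pos rfl]; ring
      · rw [if_neg h2, if_neg h2]; ring
  rw [Finset.sum_congr rfl fun k _ => hptw k, Finset.sum_add_distrib, Finset.sum_add_distrib,
    Finset.sum_ite_eq' Finset.univ i, Finset.sum_ite_eq' Finset.univ j]
  simp only [Finset.mem_univ, if_true]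
  ring

lemma aux_quad (a2 a1 a0 s t : ℝ) (ha2 : a2 < 0)
    (hs : s = 1 ∧ a1 ≤ 0 ∨ s = -1 ∧ 0 < a1) (ht : 0 < t) :
    a2 * (s * t) ^ 2 + a1 * (s * t) + a0 < a2 * 0 ^ 2 + a1 * 0 + a0 := by
  rcases hs with ⟨h, ha⟩ | ⟨h, ha⟩ <;> subst h <;> nlinarith [mul_pos ht ht]

lemma aux_icc (a s t r : ℝ) (h0 : 0 < a) (h1 : a < 1) (hs : s = 1 ∨ s = -1)
    (hr1 : r * t < a) (hr2 : r * t < 1 - a) (hrt : 0 < r * t) :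
    a + r * (s * t) ∈ Set.Icc (0 : ℝ) 1 := by
  rcases hs with h | h <;> subst h <;> constructor <;> nlinarith

lemma aux_icc' (a s t r : ℝ) (h0 : 0 < a) (h1 : a < 1) (hs : s = 1 ∨ s = -1)
    (hr1 : r * t < a) (hr2 : r * t < 1 - a) (hrt : 0 < r * t) :
    a - r * (s * t) ∈ Set.Icc (0 : ℝ) 1 := by
  rcases hs with h | h <;> subst h <;> constructor <;> nlinarith

set_option maxHeartbeats 1000000 in
theorem stmt_11 (n : ℕ) (lam mu : Fin n → ℝ) (hlam : ∀ k, 0 < lam k)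
    (hmu : ∀ k, 0 < mu k) (α : ℝ) (hα : α ∈ Set.Ioo (0 : ℝ) 1)
    (x : Fin n → ℝ) (hxIcc : ∀ k, x k ∈ Set.Icc (0 : ℝ) 1)
    (hfeas1 : ∑ k, lam k * x k / mu k < α)
    (hfeas2 : ∑ k, lam k * (1 - x k) / mu k < 1 - α)
    (i j : Fin n) (hij : i ≠ j)
    (hi : 0 < x i ∧ x i < 1) (hj : 0 < x j ∧ x j < 1) (hmuij : mu i ≠ mu j)
    (f : (Fin n → ℝ) → ℝ)
    (hf : ∀ y : Fin n → ℝ, f y =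
      ((∑ k, lam k * y k / (mu k) ^ 2) * (∑ k, lam k * y k) /
          (α ^ 2 - α * ∑ k, lam k * y k / mu k) +
        (∑ k, lam k * (1 - y k) / (mu k) ^ 2) * (∑ k, lam k * (1 - y k)) /
          ((1 - α) ^ 2 - (1 - α) * ∑ k, lam k * (1 - y k) / mu k)) /
        (∑ k, lam k))
    (l : ℝ → ℝ)
    (hl : ∀ ε : ℝ, l ε = f (fun k =>
      if k = i then x i + mu i / lam i * ε
      else if k = j then x j - mu j / lam j * ε else x k)) :
    deriv (deriv l) 0 < 0 ∧
      ¬ IsLocalMinOn f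
        {y : Fin n → ℝ | (∀ k, y k ∈ Set.Icc (0 : ℝ) 1) ∧
          ∑ k, lam k * y k / mu k < α ∧
          ∑ k, lam k * (1 - y k) / mu k < 1 - α} x := by
  have hlami := (hlam i).ne'
  have hlamj := (hlam j).ne'
  have hmui := (hmu i).ne'
  have hmuj := (hmu j).ne'
  have hlP : ∀ ε : ℝ, l ε = f (pert n lam mu x i j ε) := fun ε => hl ε
  -- constants
  set S1 : ℝ := ∑ k, lam k * x k / mu k with hS1def
  set T1 : ℝ := ∑ k, lam k * (1 - x k) / mu k with hT1def
  set A : ℝ := ∑ k, lam k * x k with hAdef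
  set A2 : ℝ := ∑ k, lam k * (1 - x k) with hA2def
  set B : ℝ := ∑ k, lam k * x k / mu k ^ 2 with hBdef
  set B2 : ℝ := ∑ k, lam k * (1 - x k) / mu k ^ 2 with hB2def
  set L : ℝ := ∑ k, lam k with hLdef
  set c : ℝ := mu i - mu j with hcdef
  set d : ℝ := 1 / mu i - 1 / mu j with hddef
  set D1 : ℝ := α ^ 2 - α * S1 with hD1def
  set D2 : ℝ := (1 - α) ^ 2 - (1 - α) * T1 with hD2def
  -- the four sum identities
  have rear : ∀ a b cc : ℝ, a * b / cc = a / cc * b := fun a b cc => mul_div_right_comm a b cc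
  have key1 : ∀ ε : ℝ, (∑ k, lam k * pert n lam mu x i j ε k / mu k) = S1 := by
    intro ε
    simp_rw [rear]
    rw [pert_sum n lam mu x i j hij (fun k => lam k / mu k) ε]
    have : lam i / mu i * (mu i / lam i) - lam j / mu j * (mu j / lam j) = 0 := by
      field_simp
      norm_num
    rw [this, hS1def]
    simp_rw [rear]
    ring
  have key2 : ∀ ε : ℝ, (∑ k, lam k * pert n lam mu x i j ε k) = A + c * ε := by
    intro ε
    rw [pert_sum n lam mu x i j hij (fun k => lam k) ε]
    have : lam i * (mu i / lam i) - lam j * (mu j / lam j) = c := by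
      field_simp
      rw [hcdef]
    rw [this]
  have key3 : ∀ ε : ℝ, (∑ k, lam k * pert n lam mu x i j ε k / mu k ^ 2) = B + d * ε := by
    intro ε
    simp_rw [rear]
    rw [pert_sum n lam mu x i j hij (fun k => lam k / mu k ^ 2) ε]
    have : lam i / mu i ^ 2 * (mu i / lam i) - lam j / mu j ^ 2 * (mu j / lam j) = d := by
      rw [hddef]; field_simp
    rw [this, hBdef]
    simp_rw [rear]
  have rear2 : ∀ a b cc : ℝ, a * (1 - b) / cc = a / cc - a / cc * b := by
    intro a b cc; ring
  have key4 : ∀ ε : ℝ, (∑ k, lam k * (1 - pert n lam mu x i j ε k) / mu k) = T1 := by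
    intro ε
    simp_rw [rear2, Finset.sum_sub_distrib]
    rw [pert_sum n lam mu x i j hij (fun k => lam k / mu k) ε]
    have : lam i / mu i * (mu i / lam i) - lam j / mu j * (mu j / lam j) = 0 := by
      field_simp
      norm_num
    rw [this, hT1def]
    simp_rw [rear2, Finset.sum_sub_distrib]
    ring
  have key5 : ∀ ε : ℝ, (∑ k, lam k * (1 - pert n lam mu x i j ε k)) = A2 - c * ε := by
    intro ε
    have r3 : ∀ a b : ℝ, a * (1 - b) = a - a * b := fun a b => by ring
    simp_rw [r3, Finset.sum_sub_distrib]
    rw [pert_sum n lam mu x i j hij (fun k => lam k) ε]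
    have : lam i * (mu i / lam i) - lam j * (mu j / lam j) = c := by field_simp; rw [hcdef]
    rw [this, hA2def]
    simp_rw [r3, Finset.sum_sub_distrib]
    ring
  have key6 : ∀ ε : ℝ, (∑ k, lam k * (1 - pert n lam mu x i j ε k) / mu k ^ 2) = B2 - d * ε := by
    intro ε
    simp_rw [rear2, Finset.sum_sub_distrib]
    rw [pert_sum n lam mu x i j hij (fun k => lam k / mu k ^ 2) ε]
    have : lam i / mu i ^ 2 * (mu i / lam i) - lam j / mu j ^ 2 * (mu j / lam j) = d := by
      rw [hddef]; field_simp
    rw [this, hB2def]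
    simp_rw [rear2, Finset.sum_sub_distrib]
    ring
  have hl' : ∀ ε : ℝ, l ε =
      ((B + d * ε) * (A + c * ε) / D1 + (B2 - d * ε) * (A2 - c * ε) / D2) / L := by
    intro ε
    rw [hlP ε, hf]
    rw [key1 ε, key2 ε, key3 ε, key4 ε, key5 ε, key6 ε]
  -- positivity facts
  have hL : 0 < L := Finset.sum_pos (fun k _ => hlam k) ⟨i, Finset.mem_univ i⟩
  have hD1 : 0 < D1 := by
    have h1 : 0 < α := hα.1
    nlinarith [mul_pos h1 (sub_pos.2 hfeas1)]
  have hD2 : 0 < D2 := by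
    have h1 : 0 < 1 - α := by have := hα.2; linarith
    nlinarith [mul_pos h1 (sub_pos.2 hfeas2)]
  have hcd : c * d < 0 := by
    have hsq : 0 < (mu i - mu j) ^ 2 := pow_two_pos_of_ne_zero (sub_ne_zero.2 hmuij)
    have hrw : c * d = -((mu i - mu j) ^ 2 / (mu i * mu j)) := by
      rw [hcdef, hddef]; field_simp; ring
    have hq : 0 < (mu i - mu j) ^ 2 / (mu i * mu j) :=
      div_pos hsq (mul_pos (hmu i) (hmu j))
    rw [hrw]; linarith
  -- quadratic form
  set a2 : ℝ := c * d * (1 / D1 + 1 / D2) / L with ha2def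
  set a1 : ℝ := ((B * c + A * d) / D1 - (B2 * c + A2 * d) / D2) / L with ha1def
  set a0 : ℝ := (B * A / D1 + B2 * A2 / D2) / L with ha0def
  have hquad : l = fun ε => a2 * ε ^ 2 + a1 * ε + a0 := by
    funext ε
    rw [hl' ε, ha2def, ha1def, ha0def]
    field_simp
    ring
  have ha2 : a2 < 0 := by
    have hpos : 0 < (1 / D1 + 1 / D2) / L :=
      div_pos (add_pos (one_div_pos.2 hD1) (one_div_pos.2 hD2)) hL
    have : a2 = c * d * ((1 / D1 + 1 / D2) / L) := by rw [ha2def]; ring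
    rw [this]
    exact mul_neg_of_neg_of_pos hcd hpos
  -- derivatives
  have hderiv1 : deriv l = fun ε => 2 * a2 * ε + a1 := by
    rw [hquad]
    funext ε
    have h : HasDerivAt (fun ε : ℝ => a2 * ε ^ 2 + a1 * ε + a0) (2 * a2 * ε + a1) ε := by
      have h1 := (hasDerivAt_pow 2 ε).const_mul a2
      have h2 := (hasDerivAt_id ε).const_mul a1
      have h3 := (h1.add h2).add_const a0
      convert h3 using 1 <;> try rfl
      push_cast
      ring
    exact h.deriv
  have hderiv2 : deriv (deriv l) 0 = 2 * a2 := by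
    rw [hderiv1]
    have h : HasDerivAt (fun ε : ℝ => 2 * a2 * ε + a1) (2 * a2) (0 : ℝ) := by
      have := ((hasDerivAt_id (0 : ℝ)).const_mul (2 * a2)).add_const a1
      simpa using this
    exact h.deriv
  constructor
  · rw [hderiv2]; linarith
  -- not a local min
  clear_value S1 T1 A A2 B B2 L c d D1 D2 a2 a1 a0
  intro hmin
  set σ : ℝ := if a1 ≤ 0 then 1 else -1 with hσdef
  have hσcases : σ = 1 ∧ a1 ≤ 0 ∨ σ = -1 ∧ 0 < a1 := by
    by_cases h : a1 ≤ 0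
    · left; exact ⟨by rw [hσdef, if_pos h], h⟩
    · right; exact ⟨by rw [hσdef, if_neg h], lt_of_not_ge h⟩
  clear_value σ
  have hσsq : σ * σ = 1 := by
    rcases hσcases with ⟨h, _⟩ | ⟨h, _⟩ <;> rw [h] <;> norm_num
  have hlt : ∀ t : ℝ, 0 < t → l (σ * t) < l 0 := by
    intro t ht
    simp only [hquad]
    exact aux_quad a2 a1 a0 σ t ha2 hσcases ht
  have hP0 : pert n lam mu x i j 0 = x := by
    funext k
    unfold pert
    split_ifs with h1 h2
    · rw [h1]; ring
    · rw [h2]; ring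
    · rfl
  have hl0 : l 0 = f x := by rw [hlP 0, hP0]
  set δ : ℝ := min (lam i / mu i * min (x i) (1 - x i))
      (lam j / mu j * min (x j) (1 - x j)) with hδdef
  clear_value δ
  have hδpos : 0 < δ := by
    rw [hδdef]
    apply lt_min
    · exact mul_pos (div_pos (hlam i) (hmu i)) (lt_min hi.1 (by linarith [hi.2]))
    · exact mul_pos (div_pos (hlam j) (hmu j)) (lt_min hj.1 (by linarith [hj.2]))
  have hboundi : ∀ t ∈ Set.Ioo (0 : ℝ) δ, mu i / lam i * t < min (x i) (1 - x i) := by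
    intro t ht
    have h1 : t < lam i / mu i * min (x i) (1 - x i) :=
      lt_of_lt_of_le ht.2 (by rw [hδdef]; exact min_le_left _ _)
    have h2 : mu i / lam i * t < mu i / lam i * (lam i / mu i * min (x i) (1 - x i)) :=
      mul_lt_mul_of_pos_left h1 (div_pos (hmu i) (hlam i))
    calc mu i / lam i * t < _ := h2
      _ = min (x i) (1 - x i) := by field_simp
  have hboundj : ∀ t ∈ Set.Ioo (0 : ℝ) δ, mu j / lam j * t < min (x j) (1 - x j) := by
    intro t ht
    have h1 : t < lam j / mu j * min (x j) (1 - x j) :=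
      lt_of_lt_of_le ht.2 (by rw [hδdef]; exact min_le_right _ _)
    have h2 : mu j / lam j * t < mu j / lam j * (lam j / mu j * min (x j) (1 - x j)) :=
      mul_lt_mul_of_pos_left h1 (div_pos (hmu j) (hlam j))
    calc mu j / lam j * t < _ := h2
      _ = min (x j) (1 - x j) := by field_simp
  have hmem : ∀ t ∈ Set.Ioo (0 : ℝ) δ, pert n lam mu x i j (σ * t) ∈
      {y : Fin n → ℝ | (∀ k, y k ∈ Set.Icc (0 : ℝ) 1) ∧
        ∑ k, lam k * y k / mu k < α ∧
        ∑ k, lam k * (1 - y k) / mu k < 1 - α} := by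
    intro t ht
    have hbi := hboundi t ht
    have hbj := hboundj t ht
    have hbi1 : mu i / lam i * t < x i := lt_of_lt_of_le hbi (min_le_left _ _)
    have hbi2 : mu i / lam i * t < 1 - x i := lt_of_lt_of_le hbi (min_le_right _ _)
    have hbj1 : mu j / lam j * t < x j := lt_of_lt_of_le hbj (min_le_left _ _)
    have hbj2 : mu j / lam j * t < 1 - x j := lt_of_lt_of_le hbj (min_le_right _ _)
    have hpti : 0 < mu i / lam i * t := mul_pos (div_pos (hmu i) (hlam i)) ht.1
    have hptj : 0 < mu j / lam j * t := mul_pos (div_pos (hmu j) (hlam j)) ht.1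
    refine ⟨?_, ?_, ?_⟩
    · intro k
      unfold pert
      split_ifs with h1 h2
      · exact aux_icc (x i) σ t (mu i / lam i) hi.1 hi.2
          (hσcases.imp And.left And.left) hbi1 hbi2 hpti
      · exact aux_icc' (x j) σ t (mu j / lam j) hj.1 hj.2
          (hσcases.imp And.left And.left) hbj1 hbj2 hptj
      · exact hxIcc k
    · rw [key1]; exact hfeas1
    · rw [key4]; exact hfeas2
  have hcont : Continuous (fun t : ℝ => pert n lam mu x i j (σ * t)) := by
    apply continuous_pi
    intro k
    by_cases h1 : k = i
    · simp only [pert, if_pos h1]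
      fun_prop
    · by_cases h2 : k = j
      · simp only [pert, if_neg h1, if_pos h2]
        fun_prop
      · simp only [pert, if_neg h1, if_neg h2]
        exact continuous_const
  have htx : Filter.Tendsto (fun t : ℝ => pert n lam mu x i j (σ * t))
      (nhdsWithin 0 (Set.Ioi 0)) (nhds x) := by
    have h0 : pert n lam mu x i j (σ * 0) = x := by rw [mul_zero, hP0]
    have h := hcont.tendsto 0
    rw [h0] at h
    exact h.mono_left nhdsWithin_le_nhds
  have hIoo : Set.Ioo (0 : ℝ) δ ∈ nhdsWithin (0 : ℝ) (Set.Ioi 0) :=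
    Ioo_mem_nhdsGT_of_mem ⟨le_refl 0, hδpos⟩
  have hmem' : ∀ᶠ t in nhdsWithin (0 : ℝ) (Set.Ioi 0),
      pert n lam mu x i j (σ * t) ∈
        {y : Fin n → ℝ | (∀ k, y k ∈ Set.Icc (0 : ℝ) 1) ∧
          ∑ k, lam k * y k / mu k < α ∧
          ∑ k, lam k * (1 - y k) / mu k < 1 - α} :=
    Filter.eventually_of_mem hIoo fun t ht => hmem t ht
  have htend : Filter.Tendsto (fun t : ℝ => pert n lam mu x i j (σ * t))
      (nhdsWithin 0 (Set.Ioi 0))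
      (nhdsWithin x {y : Fin n → ℝ | (∀ k, y k ∈ Set.Icc (0 : ℝ) 1) ∧
        ∑ k, lam k * y k / mu k < α ∧
        ∑ k, lam k * (1 - y k) / mu k < 1 - α}) :=
    tendsto_nhdsWithin_iff.mpr ⟨htx, hmem'⟩
  have hmin' : ∀ᶠ y in nhdsWithin x {y : Fin n → ℝ | (∀ k, y k ∈ Set.Icc (0 : ℝ) 1) ∧
      ∑ k, lam k * y k / mu k < α ∧
      ∑ k, lam k * (1 - y k) / mu k < 1 - α}, f x ≤ f y := hmin
  have hev1 := htend.eventually hmin'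
  have hev2 : ∀ᶠ t in nhdsWithin (0 : ℝ) (Set.Ioi 0),
      f (pert n lam mu x i j (σ * t)) < f x := by
    filter_upwards [self_mem_nhdsWithin] with t ht
    rw [← hlP (σ * t), ← hl0]
    exact hlt t ht
  obtain ⟨t, h1, h2⟩ := (hev1.and hev2).exists
  exact absurd h1 (not_le.2 h2)
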